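/- (Decomposition over an intermediate point.) Let u ≤ v ≤ y in ℤ² and let G be last-passage percolation with arbitrary real weights. Define the induced process G^{[u]}_{v,·} on v + ℤ²_{≥0} with boundary increment weights I_{v+ke₁} = G_{u,v+ke₁} − G_{u,v+(k−1)e₁} and J_{v+ke₂} = G_{u,v+ke₂} − G_{u,v+(k−1)e₂}, corner weight 0, and bulk weights ω_x for x ∈ v + ℤ²_{>0}. Then G_{u,y} = G_{u,v} + G^{[u]}_{v,y}. -/

import Mathlib

/-- A path of length `n` from `o` to `y` in `ℤ²` with up-right steps. -/
def IsUpRightPath (o y : ℤ × ℤ) (n : ℕ) (π : ℕ → ℤ × ℤ) : Prop :=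
  π 0 = o ∧ π n = y ∧ ∀ k < n, π (k + 1) - π k = (1, 0) ∨ π (k + 1) - π k = (0, 1)

/-- The last-passage time from `o` to `y` with vertex weights `ω`:
the maximal sum of weights collected along an up-right path from `o` to `y`. -/
noncomputable def lppG (ω : ℤ × ℤ → ℝ) (o y : ℤ × ℤ) : ℝ :=
  sSup { S | ∃ (n : ℕ) (π : ℕ → ℤ × ℤ), IsUpRightPath o y n π ∧
      S = ∑ k ∈ Finset.range (n + 1), ω (π k) }

/-- The weights of the LPP process induced at `v` by the LPP process started at `u`:
zero at the corner `v`, increments of `G_{u,·}` along the axes through `v`,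
and the original bulk weights strictly above-right of `v`. -/
noncomputable def inducedWt (ω : ℤ × ℤ → ℝ) (u v : ℤ × ℤ) (x : ℤ × ℤ) : ℝ :=
  if x = v then 0
  else if x.2 = v.2 ∧ v.1 < x.1 then lppG ω u x - lppG ω u (x - (1, 0))
  else if x.1 = v.1 ∧ v.2 < x.2 then lppG ω u x - lppG ω u (x - (0, 1))
  else ω x

/-- Recursive last-passage value. -/
noncomputable def lppF (ω : ℤ × ℤ → ℝ) (o : ℤ × ℤ) (y : ℤ × ℤ) : ℝ :=
  if y = o then ω o
  else if o.1 < y.1 ∧ o.2 < y.2 then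
    max (lppF ω o (y - (1, 0))) (lppF ω o (y - (0, 1))) + ω y
  else if o.1 < y.1 then lppF ω o (y - (1, 0)) + ω y
  else if o.2 < y.2 then lppF ω o (y - (0, 1)) + ω y
  else 0
termination_by ((y.1 - o.1).toNat + (y.2 - o.2).toNat)
decreasing_by
  · simp only [Prod.fst_sub, Prod.snd_sub]; omega
  · simp only [Prod.fst_sub, Prod.snd_sub]; omega
  · simp only [Prod.fst_sub, Prod.snd_sub]
    have : y ≠ o := by assumption
    have : y.1 ≠ o.1 ∨ y.2 ≠ o.2 := by
      by_contra h; push_neg at h; exact this (Prod.ext h.1 h.2)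
    omega
  · simp only [Prod.fst_sub, Prod.snd_sub]; omega

lemma path_step {o y : ℤ × ℤ} {n : ℕ} {π : ℕ → ℤ × ℤ} (h : IsUpRightPath o y n π)
    {k : ℕ} (hk : k < n) :
    ((π (k+1)).1 = (π k).1 + 1 ∧ (π (k+1)).2 = (π k).2) ∨
    ((π (k+1)).1 = (π k).1 ∧ (π (k+1)).2 = (π k).2 + 1) := by
  rcases h.2.2 k hk with h' | h'
  · left
    constructor
    · have := congrArg Prod.fst h'; simp [Prod.fst_sub] at this; omega
    · have := congrArg Prod.snd h'; simp [Prod.snd_sub] at this; omega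
  · right
    constructor
    · have := congrArg Prod.fst h'; simp [Prod.fst_sub] at this; omega
    · have := congrArg Prod.snd h'; simp [Prod.snd_sub] at this; omega

lemma path_mono {o y : ℤ × ℤ} {n : ℕ} {π : ℕ → ℤ × ℤ} (h : IsUpRightPath o y n π)
    {j k : ℕ} (hjk : j ≤ k) (hk : k ≤ n) : (π j).1 ≤ (π k).1 ∧ (π j).2 ≤ (π k).2 := by
  induction k with
  | zero => interval_cases j; exact ⟨le_refl _, le_refl _⟩
  | succ m ih =>
    rcases Nat.eq_or_lt_of_le hjk with rfl | hlt
    · exact ⟨le_refl _, le_refl _⟩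
    · have hm : j ≤ m := by omega
      have h1 := ih hm (by omega)
      rcases path_step h (show m < n by omega) with h2 | h2 <;>
        exact ⟨by omega, by omega⟩

lemma path_le {o y : ℤ × ℤ} {n : ℕ} {π : ℕ → ℤ × ℤ} (h : IsUpRightPath o y n π)
    {k : ℕ} (hk : k ≤ n) : (o.1 ≤ (π k).1 ∧ o.2 ≤ (π k).2) ∧
      ((π k).1 ≤ y.1 ∧ (π k).2 ≤ y.2) := by
  constructor
  · have := path_mono h (Nat.zero_le k) hk; rw [h.1] at this; exact this
  · have := path_mono h hk (le_refl n); rw [h.2.1] at this; exact this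

lemma lppF_eq_self (ω : ℤ × ℤ → ℝ) (o : ℤ × ℤ) : lppF ω o o = ω o := by
  rw [lppF, if_pos rfl]

lemma lppF_step_left (ω : ℤ × ℤ → ℝ) {o y : ℤ × ℤ} (h2 : o.2 ≤ y.2) (h1 : o.1 < y.1) :
    lppF ω o (y - (1, 0)) + ω y ≤ lppF ω o y := by
  conv_rhs => rw [lppF]
  have hne : y ≠ o := by intro h; subst h; omega
  rw [if_neg hne]
  by_cases hb : o.1 < y.1 ∧ o.2 < y.2
  · rw [if_pos hb]
    exact add_le_add (le_max_left _ _) le_rfl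
  · rw [if_neg hb, if_pos h1]

lemma lppF_step_right (ω : ℤ × ℤ → ℝ) {o y : ℤ × ℤ} (h1 : o.1 ≤ y.1) (h2 : o.2 < y.2) :
    lppF ω o (y - (0, 1)) + ω y ≤ lppF ω o y := by
  conv_rhs => rw [lppF]
  have hne : y ≠ o := by intro h; subst h; omega
  rw [if_neg hne]
  by_cases hb : o.1 < y.1 ∧ o.2 < y.2
  · rw [if_pos hb]
    exact add_le_add (le_max_right _ _) le_rfl
  · rw [if_neg hb]
    have : ¬ o.1 < y.1 := fun h => hb ⟨h, h2⟩
    rw [if_neg this, if_pos h2]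

lemma sum_le_lppF (ω : ℤ × ℤ → ℝ) (o : ℤ × ℤ) :
    ∀ (n : ℕ) (y : ℤ × ℤ) (π : ℕ → ℤ × ℤ), IsUpRightPath o y n π →
      ∑ k ∈ Finset.range (n + 1), ω (π k) ≤ lppF ω o y := by
  intro n
  induction n with
  | zero =>
    intro y π h
    have hyo : y = o := by rw [← h.1, ← h.2.1]
    subst hyo
    simp [lppF_eq_self, ← h.2.1]
  | succ n ih =>
    intro y π h
    have hsub : IsUpRightPath o (π n) n π := ⟨h.1, rfl, fun k hk => h.2.2 k (by omega)⟩
    have hle := (path_le hsub (le_refl n)).1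
    have hsum : ∑ k ∈ Finset.range (n + 2), ω (π k)
        = (∑ k ∈ Finset.range (n + 1), ω (π k)) + ω y := by
      rw [Finset.sum_range_succ, h.2.1]
    rw [hsum]
    rcases path_step h (Nat.lt_succ_self n) with hs | hs
    · rw [h.2.1] at hs
      have hz : π n = y - (1, 0) := by
        apply Prod.ext <;> simp [Prod.fst_sub, Prod.snd_sub] <;> omega
      calc (∑ k ∈ Finset.range (n + 1), ω (π k)) + ω y
          ≤ lppF ω o (π n) + ω y := add_le_add (ih (π n) π hsub) le_rfl
        _ ≤ lppF ω o y := by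
            rw [hz]
            exact lppF_step_left ω (by omega) (by omega)
    · rw [h.2.1] at hs
      have hz : π n = y - (0, 1) := by
        apply Prod.ext <;> simp [Prod.fst_sub, Prod.snd_sub] <;> omega
      calc (∑ k ∈ Finset.range (n + 1), ω (π k)) + ω y
          ≤ lppF ω o (π n) + ω y := add_le_add (ih (π n) π hsub) le_rfl
        _ ≤ lppF ω o y := by
            rw [hz]
            exact lppF_step_right ω (by omega) (by omega)

lemma path_extend (ω : ℤ × ℤ → ℝ) {o z : ℤ × ℤ} {n : ℕ} {π : ℕ → ℤ × ℤ}
    (h : IsUpRightPath o z n π) {y : ℤ × ℤ}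
    (hs : y - z = (1, 0) ∨ y - z = (0, 1)) :
    ∃ π' : ℕ → ℤ × ℤ, IsUpRightPath o y (n + 1) π' ∧
      ∑ k ∈ Finset.range (n + 2), ω (π' k)
        = (∑ k ∈ Finset.range (n + 1), ω (π k)) + ω y := by
  refine ⟨fun k => if k ≤ n then π k else y, ⟨?_, ?_, ?_⟩, ?_⟩
  · simp [h.1]
  · simp
  · intro k hk
    by_cases hkn : k < n
    · have h1 : k ≤ n := by omega
      have h2 : k + 1 ≤ n := by omega
      simp only [if_pos h1, if_pos h2]
      exact h.2.2 k hkn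
    · have hkeq : k = n := by omega
      subst hkeq
      simp only [le_refl, if_pos, Nat.not_succ_le_self, if_neg, h.2.1]
      simpa [h.2.1] using hs
  · rw [Finset.sum_range_succ]
    congr 1
    · apply Finset.sum_congr rfl
      intro k hk
      rw [Finset.mem_range] at hk
      simp [show k ≤ n by omega]
    · simp

lemma lppF_attained (ω : ℤ × ℤ → ℝ) (o : ℤ × ℤ) :
    ∀ (N : ℕ) (y : ℤ × ℤ), o.1 ≤ y.1 → o.2 ≤ y.2 →
      (y.1 - o.1).toNat + (y.2 - o.2).toNat ≤ N →
      ∃ (n : ℕ) (π : ℕ → ℤ × ℤ), IsUpRightPath o y n π ∧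
        lppF ω o y = ∑ k ∈ Finset.range (n + 1), ω (π k) := by
  intro N
  induction N with
  | zero =>
    intro y h1 h2 hm
    have hyo : y = o := Prod.ext (by omega) (by omega)
    subst hyo
    exact ⟨0, fun _ => y, ⟨rfl, rfl, fun k hk => absurd hk (by omega)⟩, by
      simp [lppF_eq_self]⟩
  | succ N ih =>
    intro y h1 h2 hm
    by_cases hyo : y = o
    · subst hyo
      exact ⟨0, fun _ => y, ⟨rfl, rfl, fun k hk => absurd hk (by omega)⟩, by
        simp [lppF_eq_self]⟩
    · have hval : (lppF ω o y = lppF ω o (y - (1, 0)) + ω y ∧ o.1 < y.1) ∨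
          (lppF ω o y = lppF ω o (y - (0, 1)) + ω y ∧ o.2 < y.2) := by
        rw [lppF, if_neg hyo]
        by_cases hb : o.1 < y.1 ∧ o.2 < y.2
        · rw [if_pos hb]
          rcases max_cases (lppF ω o (y - (1, 0))) (lppF ω o (y - (0, 1))) with
            ⟨hmax, _⟩ | ⟨hmax, _⟩
          · exact Or.inl ⟨by rw [hmax], hb.1⟩
          · exact Or.inr ⟨by rw [hmax], hb.2⟩
        · rw [if_neg hb]
          by_cases hx : o.1 < y.1
          · rw [if_pos hx]; exact Or.inl ⟨rfl, hx⟩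
          · have hy2 : o.2 < y.2 := by
              rcases lt_or_eq_of_le h1 with h | h
              · exact absurd h hx
              · rcases lt_or_eq_of_le h2 with h' | h'
                · exact h'
                · exact absurd (Prod.ext h.symm h'.symm) hyo
            rw [if_neg hx, if_pos hy2]
            exact Or.inr ⟨rfl, hy2⟩
      rcases hval with ⟨hv, hx⟩ | ⟨hv, hx⟩
      · obtain ⟨n, π, hp, hsum⟩ := ih (y - (1, 0))
          (by simp [Prod.fst_sub]; omega) (by simp [Prod.snd_sub]; omega)
          (by simp [Prod.fst_sub, Prod.snd_sub]; omega)
        obtain ⟨π', hp', hsum'⟩ := path_extend ω hp (y := y) (Or.inl (by abel))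
        exact ⟨n + 1, π', hp', by rw [hv, hsum, ← hsum']⟩
      · obtain ⟨n, π, hp, hsum⟩ := ih (y - (0, 1))
          (by simp [Prod.fst_sub]; omega) (by simp [Prod.snd_sub]; omega)
          (by simp [Prod.fst_sub, Prod.snd_sub]; omega)
        obtain ⟨π', hp', hsum'⟩ := path_extend ω hp (y := y) (Or.inr (by abel))
        exact ⟨n + 1, π', hp', by rw [hv, hsum, ← hsum']⟩

lemma lppG_eq_lppF (ω : ℤ × ℤ → ℝ) {o y : ℤ × ℤ} (h1 : o.1 ≤ y.1) (h2 : o.2 ≤ y.2) :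
    lppG ω o y = lppF ω o y := by
  apply IsGreatest.csSup_eq
  constructor
  · obtain ⟨n, π, hp, hsum⟩ := lppF_attained ω o _ y h1 h2 le_rfl
    exact ⟨n, π, hp, hsum⟩
  · rintro s ⟨n, π, hp, rfl⟩
    exact sum_le_lppF ω o n y π hp

lemma lppF_decomp (ω : ℤ × ℤ → ℝ) (u v : ℤ × ℤ) (hu1 : u.1 ≤ v.1) (hu2 : u.2 ≤ v.2) :
    ∀ (N : ℕ) (y : ℤ × ℤ), v.1 ≤ y.1 → v.2 ≤ y.2 →
      (y.1 - v.1).toNat + (y.2 - v.2).toNat ≤ N →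
      lppF ω u y = lppF ω u v + lppF (inducedWt ω u v) v y := by
  intro N
  induction N with
  | zero =>
    intro y h1 h2 hm
    have hyv : y = v := Prod.ext (by omega) (by omega)
    subst hyv
    rw [lppF_eq_self, inducedWt, if_pos rfl, add_zero]
  | succ N ih =>
    intro y h1 h2 hm
    by_cases hyv : y = v
    · subst hyv
      rw [lppF_eq_self, inducedWt, if_pos rfl, add_zero]
    · conv_rhs => enter [2]; rw [lppF]; rw [if_neg hyv]
      by_cases hb : v.1 < y.1 ∧ v.2 < y.2
      · rw [if_pos hb]
        have hη : inducedWt ω u v y = ω y := by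
          rw [inducedWt, if_neg hyv, if_neg (by omega), if_neg (by omega)]
        have ih1 := ih (y - (1, 0)) (by simp [Prod.fst_sub]; omega)
          (by simp [Prod.snd_sub]; omega) (by simp [Prod.fst_sub, Prod.snd_sub]; omega)
        have ih2 := ih (y - (0, 1)) (by simp [Prod.fst_sub]; omega)
          (by simp [Prod.snd_sub]; omega) (by simp [Prod.fst_sub, Prod.snd_sub]; omega)
        have hL : lppF ω u y
            = max (lppF ω u (y - (1, 0))) (lppF ω u (y - (0, 1))) + ω y := by
          rw [lppF, if_neg (by intro h; subst h; omega), if_pos ⟨by omega, by omega⟩]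
        have h1' : lppF (inducedWt ω u v) v (y - (1, 0))
            = lppF ω u (y - (1, 0)) - lppF ω u v := by rw [ih1]; ring
        have h2' : lppF (inducedWt ω u v) v (y - (0, 1))
            = lppF ω u (y - (0, 1)) - lppF ω u v := by rw [ih2]; ring
        rw [hη, hL, h1', h2', max_sub_sub_right]
        ring
      · by_cases hx : v.1 < y.1
        · -- horizontal axis: v.2 = y.2
          have hy2 : y.2 = v.2 := by omega
          rw [if_neg hb, if_pos hx]
          have hη : inducedWt ω u v y = lppF ω u y - lppF ω u (y - (1, 0)) := by
            rw [inducedWt, if_neg hyv, if_pos ⟨hy2, hx⟩,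
              lppG_eq_lppF ω (by omega) (by omega),
              lppG_eq_lppF ω (by simp [Prod.fst_sub]; omega) (by simp [Prod.snd_sub]; omega)]
          have ih1 := ih (y - (1, 0)) (by simp [Prod.fst_sub]; omega)
            (by simp [Prod.snd_sub]; omega) (by simp [Prod.fst_sub, Prod.snd_sub]; omega)
          rw [hη, ih1]
          ring
        · -- vertical axis: v.1 = y.1
          have hy1 : y.1 = v.1 := by omega
          have hy2 : v.2 < y.2 := by
            rcases lt_or_eq_of_le h2 with h | h
            · exact h
            · exact absurd (Prod.ext hy1 h.symm) hyv
          rw [if_neg hb, if_neg hx, if_pos hy2]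
          have hη : inducedWt ω u v y = lppF ω u y - lppF ω u (y - (0, 1)) := by
            rw [inducedWt, if_neg hyv, if_neg (by omega), if_pos ⟨hy1, hy2⟩,
              lppG_eq_lppF ω (by omega) (by omega),
              lppG_eq_lppF ω (by simp [Prod.fst_sub]; omega) (by simp [Prod.snd_sub]; omega)]
          have ih2 := ih (y - (0, 1)) (by simp [Prod.fst_sub]; omega)
            (by simp [Prod.snd_sub]; omega) (by simp [Prod.fst_sub, Prod.snd_sub]; omega)
          rw [hη, ih2]
          ring

/-- Decomposition over an intermediate point: for `u ≤ v ≤ y`,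
`G_{u,y} = G_{u,v} + G^{[u]}_{v,y}`. -/
theorem lpp_decomposition (ω : ℤ × ℤ → ℝ) (u v y : ℤ × ℤ)
    (huv : u ≤ v) (hvy : v ≤ y) :
    lppG ω u y = lppG ω u v + lppG (inducedWt ω u v) v y := by
  rw [Prod.le_def] at huv hvy
  rw [lppG_eq_lppF ω (le_trans huv.1 hvy.1) (le_trans huv.2 hvy.2),
    lppG_eq_lppF ω huv.1 huv.2, lppG_eq_lppF _ hvy.1 hvy.2]
  exact lppF_decomp ω u v huv.1 huv.2 _ y hvy.1 hvy.2 le_rfl
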